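/- Let c ∈ (0,√2) and p ∈ (0,1). If p > p₀, then the function θ ↦ L(c,p,θ) is strictly decreasing on the interval (−∞, θ₁) and strictly decreasing on the interval (θ₁, θ₂). If p < p₀, then θ ↦ L(c,p,θ) is strictly decreasing on (−∞, θ₂). -/

import Mathlib

open Real Filter Set

/-- `ξ = p c⁴ / 4`. -/
noncomputable def xiPar (c p : ℝ) : ℝ := p * c ^ 4 / 4

/-- `κ₁ = √((c² − √(c⁴ − 4ξ))/2)`. -/
noncomputable def kappa1 (c p : ℝ) : ℝ :=
  Real.sqrt ((c ^ 2 - Real.sqrt (c ^ 4 - 4 * xiPar c p)) / 2)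

/-- `κ₂ = √((c² + √(c⁴ − 4ξ))/2)`. -/
noncomputable def kappa2 (c p : ℝ) : ℝ :=
  Real.sqrt ((c ^ 2 + Real.sqrt (c ^ 4 - 4 * xiPar c p)) / 2)

/-- The function `L(c,p,θ)` from the paper. -/
noncomputable def Lfun (c p θ : ℝ) : ℝ :=
  (1 / 2) * (1 + kappa2 c p / kappa1 c p)
  + (1 / Real.pi) * Real.arctan
      ((kappa2 c p * (-(kappa1 c p) ^ 2 + xiPar c p + xiPar c p * θ * Real.sqrt (2 - c ^ 2))) /
       (xiPar c p * (θ * (kappa1 c p) ^ 2 + Real.sqrt (2 - c ^ 2) + θ * (1 - c ^ 2))))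
  - (kappa2 c p / (kappa1 c p * Real.pi)) * Real.arctan
      ((kappa1 c p * (-(kappa2 c p) ^ 2 + xiPar c p + xiPar c p * θ * Real.sqrt (2 - c ^ 2))) /
       (xiPar c p * (θ * (kappa2 c p) ^ 2 + Real.sqrt (2 - c ^ 2) + θ * (1 - c ^ 2))))

/-- The discontinuity point `θ₁ = −2√(2−c²)/(2−c² − c²√(1−p))`. -/
noncomputable def theta1 (c p : ℝ) : ℝ :=
  -2 * Real.sqrt (2 - c ^ 2) / (2 - c ^ 2 - c ^ 2 * Real.sqrt (1 - p))

/-- The discontinuity point `θ₂ = −2√(2−c²)/(2−c² + c²√(1−p))`. -/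
noncomputable def theta2 (c p : ℝ) : ℝ :=
  -2 * Real.sqrt (2 - c ^ 2) / (2 - c ^ 2 + c ^ 2 * Real.sqrt (1 - p))

/-- The threshold `p₀ = 4(c²−1)/c⁴`. -/
noncomputable def p0 (c : ℝ) : ℝ := 4 * (c ^ 2 - 1) / c ^ 4
section Aux

private lemma det_id (a b c s x t : ℝ) (hc2 : c ^ 2 = a ^ 2 + b ^ 2) (hxi : x = a ^ 2 * b ^ 2)
    (hs2 : s ^ 2 = 2 - c ^ 2) :
    b * (x * s) * (x * (t * a ^ 2 + s + t * (1 - c ^ 2))) -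
      b * (-a ^ 2 + x + x * t * s) * (x * (a ^ 2 + (1 - c ^ 2))) = b * (x * (a ^ 2 * (1 - x))) := by
  linear_combination (-1*b*x + b*s^2*x + b*c^2*x - a^2*b*c^2 - a^2*b^3 + a^2*b^3*s^2 + a^2*b^3*c^2 + a^4*b) * hxi + (a^4*b^5) * hs2 + (-1*a^4*b^3) * hc2

private lemma q_id (a b c s x t : ℝ) (hc2 : c ^ 2 = a ^ 2 + b ^ 2) (hxi : x = a ^ 2 * b ^ 2)
    (hs2 : s ^ 2 = 2 - c ^ 2) :
    b ^ 2 * ((x * (t * a ^ 2 + s + t * (1 - c ^ 2))) ^ 2 + (b * (-a ^ 2 + x + x * t * s)) ^ 2) -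
      a ^ 2 * ((x * (t * b ^ 2 + s + t * (1 - c ^ 2))) ^ 2 + (a * (-b ^ 2 + x + x * t * s)) ^ 2)
      = (b ^ 2 - a ^ 2) * x ^ 2 * (1 - x) * t ^ 2 := by
  linear_combination (b^2*x^2*t^2 + 2*b^2*s*x*t + b^2*s^2*x - 2*b^2*c^2*x*t^2 - 2*b^2*c^2*s*x*t + b^2*c^4*x*t^2 + b^4*x + 2*b^4*s*x*t + b^4*s^2*x*t^2 - a^2*x^2*t^2 - 2*a^2*s*x*t - a^2*s^2*x + 2*a^2*c^2*x*t^2 + 2*a^2*c^2*s*x*t - a^2*c^4*x*t^2 - 2*a^2*b^4 + a^2*b^4*s^2 - 2*a^2*b^4*c^2*t^2 - 2*a^2*b^4*c^2*s*t + a^2*b^4*c^4*t^2 + a^2*b^6 + 2*a^2*b^6*s*t + a^2*b^6*s^2*t^2 - a^4*x - 2*a^4*s*x*t - a^4*s^2*x*t^2 + 2*a^4*b^2 - a^4*b^2*s^2 + 2*a^4*b^2*c^2*t^2 + 2*a^4*b^2*c^2*s*t - a^4*b^2*c^4*t^2 - a^6*b^2 - 2*a^6*b^2*s*t - a^6*b^2*s^2*t^2)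 * hxi + (a^4*b^6 + a^4*b^8*t^2 - a^6*b^4 - a^8*b^4*t^2) * hs2 + (-1*a^4*b^6 - 2*a^4*b^6*t^2 - 2*a^4*b^6*s*t + a^4*b^6*c^2*t^2 + a^6*b^4 + 2*a^6*b^4*t^2 + 2*a^6*b^4*s*t - a^6*b^4*c^2*t^2) * hc2

private lemma quot_aux (n' n d' d : ℝ) (hd : d ≠ 0) :
    1 / (1 + (n / d) ^ 2) * ((n' * d - n * d') / d ^ 2) = (n' * d - n * d') / (d ^ 2 + n ^ 2) := by
  have h1 : (0:ℝ) < d ^ 2 := lt_of_le_of_ne (sq_nonneg d) (Ne.symm (pow_ne_zero 2 hd))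
  have h2 : d ^ 2 + n ^ 2 ≠ 0 := by nlinarith [sq_nonneg n]
  field_simp

end Aux
set_option maxHeartbeats 1000000 in
private lemma generic (a b c s x : ℝ) (ha : 0 < a) (hab : a < b) (hx : 0 < x) (hx1 : x < 1)
    (hs : 0 < s) (hc2 : c ^ 2 = a ^ 2 + b ^ 2) (hxi : x = a ^ 2 * b ^ 2)
    (hs2 : s ^ 2 = 2 - c ^ 2) (θ : ℝ) (hθ : θ < 0)
    (h1 : θ * a ^ 2 + s + θ * (1 - c ^ 2) ≠ 0) (h2 : θ * b ^ 2 + s + θ * (1 - c ^ 2) ≠ 0) :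
    ∃ v, HasDerivAt (fun t => (1 / 2) * (1 + b / a)
        + (1 / Real.pi) * Real.arctan
            ((b * (-a ^ 2 + x + x * t * s)) / (x * (t * a ^ 2 + s + t * (1 - c ^ 2))))
        - (b / (a * Real.pi)) * Real.arctan
            ((a * (-b ^ 2 + x + x * t * s)) / (x * (t * b ^ 2 + s + t * (1 - c ^ 2))))) v θ
      ∧ v < 0 := by
  have hπ : (0:ℝ) < Real.pi := Real.pi_pos
  have hb : 0 < b := lt_trans ha hab
  have hd1ne : x * (θ * a ^ 2 + s + θ * (1 - c ^ 2)) ≠ 0 := mul_ne_zero (ne_of_gt hx) h1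
  have hd2ne : x * (θ * b ^ 2 + s + θ * (1 - c ^ 2)) ≠ 0 := mul_ne_zero (ne_of_gt hx) h2
  have hn1 : HasDerivAt (fun t : ℝ => b * (-a ^ 2 + x + x * t * s)) (b * (x * s)) θ := by
    simpa using ((((hasDerivAt_id θ).const_mul x).mul_const s).const_add (-a ^ 2 + x)).const_mul b
  have hn2 : HasDerivAt (fun t : ℝ => a * (-b ^ 2 + x + x * t * s)) (a * (x * s)) θ := by
    simpa using ((((hasDerivAt_id θ).const_mul x).mul_const s).const_add (-b ^ 2 + x)).const_mul a
  have hdd1 : HasDerivAt (fun t : ℝ => x * (t * a ^ 2 + s + t * (1 - c ^ 2)))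
      (x * (a ^ 2 + (1 - c ^ 2))) θ := by
    simpa using ((((hasDerivAt_id θ).mul_const (a ^ 2)).add_const s).add
      ((hasDerivAt_id θ).mul_const (1 - c ^ 2))).const_mul x
  have hdd2 : HasDerivAt (fun t : ℝ => x * (t * b ^ 2 + s + t * (1 - c ^ 2)))
      (x * (b ^ 2 + (1 - c ^ 2))) θ := by
    simpa using ((((hasDerivAt_id θ).mul_const (b ^ 2)).add_const s).add
      ((hasDerivAt_id θ).mul_const (1 - c ^ 2))).const_mul x
  have hg1 : HasDerivAt
      (fun t : ℝ => (b * (-a ^ 2 + x + x * t * s)) / (x * (t * a ^ 2 + s + t * (1 - c ^ 2))))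
      ((b * (x * s) * (x * (θ * a ^ 2 + s + θ * (1 - c ^ 2)))
        - b * (-a ^ 2 + x + x * θ * s) * (x * (a ^ 2 + (1 - c ^ 2))))
        / (x * (θ * a ^ 2 + s + θ * (1 - c ^ 2))) ^ 2) θ := hn1.div hdd1 hd1ne
  have hg2 : HasDerivAt
      (fun t : ℝ => (a * (-b ^ 2 + x + x * t * s)) / (x * (t * b ^ 2 + s + t * (1 - c ^ 2))))
      ((a * (x * s) * (x * (θ * b ^ 2 + s + θ * (1 - c ^ 2)))
        - a * (-b ^ 2 + x + x * θ * s) * (x * (b ^ 2 + (1 - c ^ 2))))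
        / (x * (θ * b ^ 2 + s + θ * (1 - c ^ 2))) ^ 2) θ := hn2.div hdd2 hd2ne
  have ha1 : HasDerivAt
      (fun t : ℝ => Real.arctan
        ((b * (-a ^ 2 + x + x * t * s)) / (x * (t * a ^ 2 + s + t * (1 - c ^ 2)))))
      (1 / (1 + ((b * (-a ^ 2 + x + x * θ * s)) / (x * (θ * a ^ 2 + s + θ * (1 - c ^ 2)))) ^ 2) *
        ((b * (x * s) * (x * (θ * a ^ 2 + s + θ * (1 - c ^ 2)))
        - b * (-a ^ 2 + x + x * θ * s) * (x * (a ^ 2 + (1 - c ^ 2))))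
        / (x * (θ * a ^ 2 + s + θ * (1 - c ^ 2))) ^ 2)) θ := hg1.arctan
  have ha2 : HasDerivAt
      (fun t : ℝ => Real.arctan
        ((a * (-b ^ 2 + x + x * t * s)) / (x * (t * b ^ 2 + s + t * (1 - c ^ 2)))))
      (1 / (1 + ((a * (-b ^ 2 + x + x * θ * s)) / (x * (θ * b ^ 2 + s + θ * (1 - c ^ 2)))) ^ 2) *
        ((a * (x * s) * (x * (θ * b ^ 2 + s + θ * (1 - c ^ 2)))
        - a * (-b ^ 2 + x + x * θ * s) * (x * (b ^ 2 + (1 - c ^ 2))))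
        / (x * (θ * b ^ 2 + s + θ * (1 - c ^ 2))) ^ 2)) θ := hg2.arctan
  refine ⟨_, ((ha1.const_mul (1 / Real.pi)).const_add ((1 / 2) * (1 + b / a))).sub
    (ha2.const_mul (b / (a * Real.pi))), ?_⟩
  rw [quot_aux _ _ _ _ hd1ne, quot_aux _ _ _ _ hd2ne,
    det_id a b c s x θ hc2 hxi hs2,
    det_id b a c s x θ (by linarith) (by rw [hxi]; ring) hs2]
  set D1 := x * (θ * a ^ 2 + s + θ * (1 - c ^ 2)) with hD1def
  set D2 := x * (θ * b ^ 2 + s + θ * (1 - c ^ 2)) with hD2def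
  set N1 := b * (-a ^ 2 + x + x * θ * s) with hN1def
  set N2 := a * (-b ^ 2 + x + x * θ * s) with hN2def
  have hq' : b ^ 2 * (D1 ^ 2 + N1 ^ 2) - a ^ 2 * (D2 ^ 2 + N2 ^ 2)
      = (b ^ 2 - a ^ 2) * x ^ 2 * (1 - x) * θ ^ 2 := q_id a b c s x θ hc2 hxi hs2
  have hQ1 : 0 < D1 ^ 2 + N1 ^ 2 := by
    have h1' : (0:ℝ) < D1 ^ 2 := lt_of_le_of_ne (sq_nonneg _) (Ne.symm (pow_ne_zero 2 hd1ne))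
    nlinarith [sq_nonneg N1]
  have hQ2 : 0 < D2 ^ 2 + N2 ^ 2 := by
    have h1' : (0:ℝ) < D2 ^ 2 := lt_of_le_of_ne (sq_nonneg _) (Ne.symm (pow_ne_zero 2 hd2ne))
    nlinarith [sq_nonneg N2]
  have ha0 : a ≠ 0 := ne_of_gt ha
  have hπ0 : Real.pi ≠ 0 := ne_of_gt hπ
  have hQ20 : D2 ^ 2 + N2 ^ 2 ≠ 0 := ne_of_gt hQ2
  have e1 : (1 / Real.pi) * (b * (x * (a ^ 2 * (1 - x))) / (D1 ^ 2 + N1 ^ 2))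
      = (b * x * (1 - x)) * a ^ 2 / (Real.pi * (D1 ^ 2 + N1 ^ 2)) := by
    rw [div_mul_eq_mul_div, one_mul, div_div]; ring_nf
  have e2 : (b / (a * Real.pi)) * (a * (x * (b ^ 2 * (1 - x))) / (D2 ^ 2 + N2 ^ 2))
      = (b * x * (1 - x)) * b ^ 2 / (Real.pi * (D2 ^ 2 + N2 ^ 2)) := by
    field_simp
  rw [e1, e2, sub_neg, div_lt_div_iff₀ (mul_pos hπ hQ1) (mul_pos hπ hQ2)]
  clear hn1 hn2 hdd1 hdd2 hg1 hg2 ha1 ha2 e1 e2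
  have hθ2 : 0 < θ ^ 2 := lt_of_le_of_ne (sq_nonneg θ) (Ne.symm (pow_ne_zero 2 (ne_of_lt hθ)))
  have hkey : a ^ 2 * (D2 ^ 2 + N2 ^ 2) < b ^ 2 * (D1 ^ 2 + N1 ^ 2) := by
    nlinarith [mul_pos (mul_pos (mul_pos (by nlinarith : (0:ℝ) < b ^ 2 - a ^ 2)
      (by positivity : (0:ℝ) < x ^ 2)) (by linarith : (0:ℝ) < 1 - x)) hθ2]
  have hk : (0:ℝ) < b * x * (1 - x) * Real.pi := by
    have h1x : (0:ℝ) < 1 - x := by linarith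
    positivity
  nlinarith [mul_lt_mul_of_pos_left hkey hk]

private lemma LderivNeg (c p : ℝ) (hc : c ∈ Set.Ioo 0 (Real.sqrt 2)) (hp : p ∈ Set.Ioo 0 1)
    (θ : ℝ) (hθ : θ < 0)
    (h1 : θ * kappa1 c p ^ 2 + Real.sqrt (2 - c ^ 2) + θ * (1 - c ^ 2) ≠ 0)
    (h2 : θ * kappa2 c p ^ 2 + Real.sqrt (2 - c ^ 2) + θ * (1 - c ^ 2) ≠ 0) :
    ∃ v, HasDerivAt (fun t => Lfun c p t) v θ ∧ v < 0 := by
  obtain ⟨hc0, hcs⟩ := hc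
  obtain ⟨hp0', hp1⟩ := hp
  have hsq2 : Real.sqrt 2 ^ 2 = 2 := Real.sq_sqrt (by norm_num)
  have hc2lt : c ^ 2 < 2 := by nlinarith [Real.sqrt_nonneg 2]
  have hc2pos : 0 < c ^ 2 := by positivity
  have hs2 : Real.sqrt (2 - c ^ 2) ^ 2 = 2 - c ^ 2 := Real.sq_sqrt (by linarith)
  have hspos : 0 < Real.sqrt (2 - c ^ 2) := Real.sqrt_pos.mpr (by linarith)
  have hxpos : 0 < xiPar c p := by
    rw [xiPar]; positivity
  have hc4lt : c ^ 4 < 4 := by nlinarith [mul_lt_mul_of_pos_left hc2lt hc2pos]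
  have hx1 : xiPar c p < 1 := by
    rw [xiPar]
    nlinarith [mul_nonneg (by linarith : (0:ℝ) ≤ 1 - p) (by positivity : (0:ℝ) ≤ c ^ 4)]
  have hDval : c ^ 4 - 4 * xiPar c p = (c ^ 2) ^ 2 * (1 - p) := by rw [xiPar]; ring
  have hD2 : Real.sqrt (c ^ 4 - 4 * xiPar c p) ^ 2 = c ^ 4 - 4 * xiPar c p :=
    Real.sq_sqrt (by rw [hDval]; exact mul_nonneg (sq_nonneg _) (by linarith))
  have hDnn : 0 ≤ Real.sqrt (c ^ 4 - 4 * xiPar c p) := Real.sqrt_nonneg _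
  have hDpos : 0 < Real.sqrt (c ^ 4 - 4 * xiPar c p) :=
    Real.sqrt_pos.mpr (by rw [hDval]; exact mul_pos (pow_pos hc2pos 2) (by linarith))
  have hDlt : Real.sqrt (c ^ 4 - 4 * xiPar c p) < c ^ 2 := by nlinarith
  have ha2 : kappa1 c p ^ 2 = (c ^ 2 - Real.sqrt (c ^ 4 - 4 * xiPar c p)) / 2 := by
    rw [kappa1]; exact Real.sq_sqrt (by linarith)
  have hb2 : kappa2 c p ^ 2 = (c ^ 2 + Real.sqrt (c ^ 4 - 4 * xiPar c p)) / 2 := by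
    rw [kappa2]; exact Real.sq_sqrt (by linarith)
  have hapos : 0 < kappa1 c p := by
    rw [kappa1]; exact Real.sqrt_pos.mpr (by linarith)
  have haltb : kappa1 c p < kappa2 c p := by
    rw [kappa1, kappa2]
    exact Real.sqrt_lt_sqrt (by linarith) (by linarith)
  have hc2ab : c ^ 2 = kappa1 c p ^ 2 + kappa2 c p ^ 2 := by rw [ha2, hb2]; ring
  have hxab : xiPar c p = kappa1 c p ^ 2 * kappa2 c p ^ 2 := by
    rw [ha2, hb2]; linear_combination ((1:ℝ)/4) * hD2
  obtain ⟨v, hv, hneg⟩ := generic (kappa1 c p) (kappa2 c p) c (Real.sqrt (2 - c ^ 2))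
    (xiPar c p) hapos haltb hxpos hx1 hspos hc2ab hxab hs2 θ hθ h1 h2
  refine ⟨v, ?_, hneg⟩
  have hfun : (fun t => Lfun c p t) = (fun t => (1 / 2) * (1 + kappa2 c p / kappa1 c p)
        + (1 / Real.pi) * Real.arctan
            ((kappa2 c p * (-(kappa1 c p) ^ 2 + xiPar c p + xiPar c p * t * Real.sqrt (2 - c ^ 2))) /
              (xiPar c p * (t * kappa1 c p ^ 2 + Real.sqrt (2 - c ^ 2) + t * (1 - c ^ 2))))
        - (kappa2 c p / (kappa1 c p * Real.pi)) * Real.arctan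
            ((kappa1 c p * (-(kappa2 c p) ^ 2 + xiPar c p + xiPar c p * t * Real.sqrt (2 - c ^ 2))) /
              (xiPar c p * (t * kappa2 c p ^ 2 + Real.sqrt (2 - c ^ 2) + t * (1 - c ^ 2))))) := by
    funext t; rw [Lfun]
  rw [hfun]
  exact hv
private lemma anti_aux (c p : ℝ) (hc : c ∈ Set.Ioo 0 (Real.sqrt 2)) (hp : p ∈ Set.Ioo 0 1)
    {S : Set ℝ} (hS : IsOpen S) (hconv : Convex ℝ S)
    (hmem : ∀ θ ∈ S, θ < 0 ∧
      θ * kappa1 c p ^ 2 + Real.sqrt (2 - c ^ 2) + θ * (1 - c ^ 2) ≠ 0 ∧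
      θ * kappa2 c p ^ 2 + Real.sqrt (2 - c ^ 2) + θ * (1 - c ^ 2) ≠ 0) :
    StrictAntiOn (fun θ => Lfun c p θ) S := by
  apply strictAntiOn_of_deriv_neg hconv
  · intro θ hθ
    obtain ⟨h0, h1, h2⟩ := hmem θ hθ
    obtain ⟨v, hv, -⟩ := LderivNeg c p hc hp θ h0 h1 h2
    exact hv.continuousAt.continuousWithinAt
  · intro θ hθ
    rw [hS.interior_eq] at hθ
    obtain ⟨h0, h1, h2⟩ := hmem θ hθ
    obtain ⟨v, hv, hneg⟩ := LderivNeg c p hc hp θ h0 h1 h2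
    rwa [hv.deriv]

set_option maxHeartbeats 1000000 in
/-- For `c ∈ (0,√2)`, `p ∈ (0,1)`: if `p > p₀` then `θ ↦ L(c,p,θ)` is
strictly decreasing on `(−∞, θ₁)` and on `(θ₁, θ₂)`; if `p < p₀` then it is strictly
decreasing on `(−∞, θ₂)`. -/
theorem stmt9 (c p : ℝ) (hc : c ∈ Set.Ioo 0 (Real.sqrt 2)) (hp : p ∈ Set.Ioo 0 1) :
    (p > p0 c →
      StrictAntiOn (fun θ => Lfun c p θ) (Set.Iio (theta1 c p)) ∧
      StrictAntiOn (fun θ => Lfun c p θ) (Set.Ioo (theta1 c p) (theta2 c p))) ∧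
    (p < p0 c →
      StrictAntiOn (fun θ => Lfun c p θ) (Set.Iio (theta2 c p))) := by
  obtain ⟨hc0, hcs⟩ := hc
  obtain ⟨hpp0, hp1⟩ := hp
  have hsq2 : Real.sqrt 2 ^ 2 = 2 := Real.sq_sqrt (by norm_num)
  have hc2lt : c ^ 2 < 2 := by nlinarith [Real.sqrt_nonneg 2]
  have hc2pos : 0 < c ^ 2 := by positivity
  have hs2 : Real.sqrt (2 - c ^ 2) ^ 2 = 2 - c ^ 2 := Real.sq_sqrt (by linarith)
  have hspos : 0 < Real.sqrt (2 - c ^ 2) := Real.sqrt_pos.mpr (by linarith)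
  have hrnn : 0 ≤ Real.sqrt (1 - p) := Real.sqrt_nonneg _
  have hrpos : 0 < Real.sqrt (1 - p) := Real.sqrt_pos.mpr (by linarith)
  have hr2 : Real.sqrt (1 - p) ^ 2 = 1 - p := Real.sq_sqrt (by linarith)
  have hrlt1 : Real.sqrt (1 - p) < 1 := by nlinarith
  have hsqD : Real.sqrt (c ^ 4 - 4 * xiPar c p) = c ^ 2 * Real.sqrt (1 - p) := by
    rw [show c ^ 4 - 4 * xiPar c p = (c ^ 2) ^ 2 * (1 - p) by rw [xiPar]; ring,
      Real.sqrt_mul (sq_nonneg _), Real.sqrt_sq (sq_nonneg c)]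
  have ha2 : kappa1 c p ^ 2 = (c ^ 2 - c ^ 2 * Real.sqrt (1 - p)) / 2 := by
    rw [kappa1, hsqD]
    exact Real.sq_sqrt (by nlinarith)
  have hb2 : kappa2 c p ^ 2 = (c ^ 2 + c ^ 2 * Real.sqrt (1 - p)) / 2 := by
    rw [kappa2, hsqD]
    exact Real.sq_sqrt (by nlinarith)
  have hE1 : ∀ θ : ℝ, θ * kappa1 c p ^ 2 + Real.sqrt (2 - c ^ 2) + θ * (1 - c ^ 2)
      = θ * (2 - c ^ 2 - c ^ 2 * Real.sqrt (1 - p)) / 2 + Real.sqrt (2 - c ^ 2) := by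
    intro θ; linear_combination θ * ha2
  have hE2 : ∀ θ : ℝ, θ * kappa2 c p ^ 2 + Real.sqrt (2 - c ^ 2) + θ * (1 - c ^ 2)
      = θ * (2 - c ^ 2 + c ^ 2 * Real.sqrt (1 - p)) / 2 + Real.sqrt (2 - c ^ 2) := by
    intro θ; linear_combination θ * hb2
  have he2pos : 0 < 2 - c ^ 2 + c ^ 2 * Real.sqrt (1 - p) := by nlinarith
  have ht2neg : theta2 c p < 0 := by
    rw [theta2]
    exact div_neg_of_neg_of_pos (by nlinarith) he2pos
  have ht2 : theta2 c p * (2 - c ^ 2 + c ^ 2 * Real.sqrt (1 - p)) = -2 * Real.sqrt (2 - c ^ 2) := by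
    rw [theta2, div_mul_cancel₀ _ (ne_of_gt he2pos)]
  constructor
  · -- case p > p0
    intro hpg
    have hc4 : 4 * (c ^ 2 - 1) < p * c ^ 4 := by
      rw [p0, gt_iff_lt, div_lt_iff₀ (by positivity)] at hpg
      linarith
    have hu2 : (c ^ 2 * Real.sqrt (1 - p)) ^ 2 = c ^ 4 * (1 - p) := by
      rw [mul_pow, hr2]; ring
    have he1pos : 0 < 2 - c ^ 2 - c ^ 2 * Real.sqrt (1 - p) := by
      nlinarith [hu2, mul_nonneg (sq_nonneg c) hrnn]
    have ht1neg : theta1 c p < 0 := by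
      rw [theta1]
      exact div_neg_of_neg_of_pos (by nlinarith) he1pos
    have ht1 : theta1 c p * (2 - c ^ 2 - c ^ 2 * Real.sqrt (1 - p)) = -2 * Real.sqrt (2 - c ^ 2) := by
      rw [theta1, div_mul_cancel₀ _ (ne_of_gt he1pos)]
    have ht1lt2 : theta1 c p < theta2 c p := by
      rw [theta1, theta2, div_lt_div_iff₀ he1pos he2pos]
      nlinarith [mul_pos hspos (mul_pos hc2pos hrpos)]
    constructor
    · refine anti_aux c p ⟨hc0, hcs⟩ ⟨hpp0, hp1⟩ isOpen_Iio (convex_Iio _) ?_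
      intro θ hθ
      rw [Set.mem_Iio] at hθ
      have hθ0 : θ < 0 := lt_trans hθ ht1neg
      have hm1 : θ * (2 - c ^ 2 - c ^ 2 * Real.sqrt (1 - p)) < -2 * Real.sqrt (2 - c ^ 2) := by
        calc θ * (2 - c ^ 2 - c ^ 2 * Real.sqrt (1 - p)) < theta1 c p * (2 - c ^ 2 - c ^ 2 * Real.sqrt (1 - p)) :=
              mul_lt_mul_of_pos_right hθ he1pos
          _ = -2 * Real.sqrt (2 - c ^ 2) := ht1
      have hm2 : θ * (2 - c ^ 2 + c ^ 2 * Real.sqrt (1 - p)) < -2 * Real.sqrt (2 - c ^ 2) := by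
        calc θ * (2 - c ^ 2 + c ^ 2 * Real.sqrt (1 - p))
            < theta2 c p * (2 - c ^ 2 + c ^ 2 * Real.sqrt (1 - p)) :=
              mul_lt_mul_of_pos_right (lt_trans hθ ht1lt2) he2pos
          _ = -2 * Real.sqrt (2 - c ^ 2) := ht2
      refine ⟨hθ0, ?_, ?_⟩
      · rw [hE1 θ]; intro h; nlinarith
      · rw [hE2 θ]; intro h; nlinarith
    · refine anti_aux c p ⟨hc0, hcs⟩ ⟨hpp0, hp1⟩ isOpen_Ioo (convex_Ioo _ _) ?_
      intro θ hθ
      obtain ⟨hθa, hθb⟩ := hθ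
      have hθ0 : θ < 0 := lt_trans hθb ht2neg
      have hm1 : -2 * Real.sqrt (2 - c ^ 2) < θ * (2 - c ^ 2 - c ^ 2 * Real.sqrt (1 - p)) := by
        calc -2 * Real.sqrt (2 - c ^ 2) = theta1 c p * (2 - c ^ 2 - c ^ 2 * Real.sqrt (1 - p)) := ht1.symm
          _ < θ * (2 - c ^ 2 - c ^ 2 * Real.sqrt (1 - p)) := mul_lt_mul_of_pos_right hθa he1pos
      have hm2 : θ * (2 - c ^ 2 + c ^ 2 * Real.sqrt (1 - p)) < -2 * Real.sqrt (2 - c ^ 2) := by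
        calc θ * (2 - c ^ 2 + c ^ 2 * Real.sqrt (1 - p))
            < theta2 c p * (2 - c ^ 2 + c ^ 2 * Real.sqrt (1 - p)) :=
              mul_lt_mul_of_pos_right hθb he2pos
          _ = -2 * Real.sqrt (2 - c ^ 2) := ht2
      refine ⟨hθ0, ?_, ?_⟩
      · rw [hE1 θ]; intro h; nlinarith
      · rw [hE2 θ]; intro h; nlinarith
  · -- case p < p0
    intro hpl
    have hc4 : p * c ^ 4 < 4 * (c ^ 2 - 1) := by
      rw [p0, lt_div_iff₀ (by positivity)] at hpl
      linarith
    have hu2 : (c ^ 2 * Real.sqrt (1 - p)) ^ 2 = c ^ 4 * (1 - p) := by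
      rw [mul_pow, hr2]; ring
    have he1neg : 2 - c ^ 2 - c ^ 2 * Real.sqrt (1 - p) < 0 := by
      nlinarith [hu2, mul_nonneg (sq_nonneg c) hrnn]
    refine anti_aux c p ⟨hc0, hcs⟩ ⟨hpp0, hp1⟩ isOpen_Iio (convex_Iio _) ?_
    intro θ hθ
    rw [Set.mem_Iio] at hθ
    have hθ0 : θ < 0 := lt_trans hθ ht2neg
    have hm2 : θ * (2 - c ^ 2 + c ^ 2 * Real.sqrt (1 - p)) < -2 * Real.sqrt (2 - c ^ 2) := by
      calc θ * (2 - c ^ 2 + c ^ 2 * Real.sqrt (1 - p))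
          < theta2 c p * (2 - c ^ 2 + c ^ 2 * Real.sqrt (1 - p)) :=
            mul_lt_mul_of_pos_right hθ he2pos
        _ = -2 * Real.sqrt (2 - c ^ 2) := ht2
    have hm1 : 0 < θ * (2 - c ^ 2 - c ^ 2 * Real.sqrt (1 - p)) :=
      mul_pos_of_neg_of_neg hθ0 he1neg
    refine ⟨hθ0, ?_, ?_⟩
    · rw [hE1 θ]; intro h; nlinarith
    · rw [hE2 θ]; intro h; nlinarith
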